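/- arXiv:1709.08706 — 2 statements merged into one kernel-verified Lean document; each statement's English description precedes it below -/
import Mathlib

section
/- Let c = γ + μ/β > 0 be fixed and, for each N ≥ 2, let ρ*_N ∈ (0,1) be bounded away from 0 and satisfy (1-ρ*_N) = (1-2ρ*_N)·(c + log N + log ρ*_N). Then ρ*_N → 1/2 as N → ∞, and for sufficiently large N, ρ*_N < 1/2. -/
open Filter Topology

/-- With `c = γ + μ/β > 0` fixed, if `ρ*_N ∈ (0,1)` is bounded away
from `0` and satisfies `(1-ρ*_N) = (1-2ρ*_N)(c + log N + log ρ*_N)` for all `N ≥ 2`,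
then `ρ*_N → 1/2` and `ρ*_N < 1/2` for all sufficiently large `N`. -/
theorem mean_field_optimal_density_tendsto_half (c : ℝ) (hc : 0 < c) (ρ : ℕ → ℝ)
    (hmem : ∀ N, 2 ≤ N → ρ N ∈ Set.Ioo (0 : ℝ) 1)
    (hbdd : ∃ ε > 0, ∀ N, 2 ≤ N → ε ≤ ρ N)
    (heq : ∀ N, 2 ≤ N →
      1 - ρ N = (1 - 2 * ρ N) * (c + Real.log N + Real.log (ρ N))) :
    Tendsto ρ atTop (𝓝 (1 / 2)) ∧ ∀ᶠ N : ℕ in atTop, ρ N < 1 / 2 := by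
  obtain ⟨ε, hε0, hεle⟩ := hbdd
  have hlogN : Tendsto (fun N : ℕ => Real.log N) atTop atTop :=
    Real.tendsto_log_atTop.comp tendsto_natCast_atTop_atTop
  set L : ℕ → ℝ := fun N => c + Real.log N + Real.log ε with hLdef
  have hL : Tendsto L atTop atTop := by
    have h := tendsto_atTop_add_const_right atTop (c + Real.log ε) hlogN
    exact h.congr (fun N => by simp [hLdef]; ring)
  have hkey : ∀ᶠ N : ℕ in atTop,
      ρ N < 1 / 2 ∧ 1 / 2 - 1 / (2 * L N) ≤ ρ N := by
    filter_upwards [eventually_ge_atTop 2, hL.eventually_ge_atTop 1] with N hN2 hL1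
    obtain ⟨hρ0, hρ1⟩ := hmem N hN2
    have hεN := hεle N hN2
    have heqN := heq N hN2
    have hlog : Real.log ε ≤ Real.log (ρ N) := Real.log_le_log hε0 hεN
    set D := c + Real.log N + Real.log (ρ N) with hDdef
    have hDL : L N ≤ D := by simp only [hLdef, hDdef]; linarith
    have hD1 : 1 ≤ D := le_trans hL1 hDL
    have hpos : 0 < 1 - 2 * ρ N := by nlinarith
    refine ⟨by linarith, ?_⟩
    have hLpos : (0:ℝ) < L N := by linarith
    have h1 : (1 - 2 * ρ N) * L N ≤ 1 := by nlinarith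
    have h2 : 1 - 2 * ρ N ≤ 1 / L N := (le_div_iff₀ hLpos).2 h1
    have h3 : 1 / (2 * L N) = (1 / L N) / 2 := by rw [div_div, mul_comm (L N) 2]
    linarith
  constructor
  · have h2L : Tendsto (fun N => 2 * L N) atTop atTop :=
      hL.const_mul_atTop two_pos
    have hinv : Tendsto (fun N => 1 / (2 * L N)) atTop (𝓝 0) := by
      exact h2L.inv_tendsto_atTop.congr fun N => by simp [one_div]
    have hlow : Tendsto (fun N => 1 / 2 - 1 / (2 * L N)) atTop (𝓝 (1/2)) := by
      simpa using (tendsto_const_nhds (x := (1:ℝ)/2) (f := atTop)).sub hinv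
    exact tendsto_of_tendsto_of_tendsto_of_le_of_le' hlow tendsto_const_nhds
      (hkey.mono fun N h => h.2) (hkey.mono fun N h => le_of_lt h.1)
  · exact hkey.mono fun N h => h.1
end

section
/- For a symmetric simple random walk on ℤ started at 0, the expected first time at which the walk has visited r distinct sites equals r(r-1)/2. -/
open MeasureTheory ProbabilityTheory
open scoped ENNReal

/-- The first time (as an element of `ℝ≥0∞`, `⊤` if never) at which the walk with
partial sums `X` has visited `r` distinct sites (including the starting site `0`). -/
noncomputable def timeToVisitDistinct {Ω : Type*} (X : ℕ → Ω → ℤ) (r : ℕ) (ω : Ω) :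
    ℝ≥0∞ :=
  sInf ((fun n : ℕ => (n : ℝ≥0∞)) ''
    {n : ℕ | r ≤ ((Finset.range (n + 1)).image (fun i => X i ω)).card})

namespace SRW

/-- partial sums of a path of steps -/
def s (x : ℕ → ℤ) (n : ℕ) : ℤ := ∑ i ∈ Finset.range n, x i

/-- running maximum of the partial sums `s 0, …, s n` -/
def mx (x : ℕ → ℤ) : ℕ → ℤ
  | 0 => 0
  | n+1 => max (mx x n) (s x (n+1))

/-- running minimum -/
def mn (x : ℕ → ℤ) : ℕ → ℤ
  | 0 => 0
  | n+1 => min (mn x n) (s x (n+1))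

def A (x : ℕ → ℤ) (n : ℕ) : ℤ := mx x n - s x n
def B (x : ℕ → ℤ) (n : ℕ) : ℤ := s x n - mn x n
def D (x : ℕ → ℤ) (n : ℕ) : ℤ := mx x n - mn x n
def vf (a b : ℤ) : ℤ := (a+b)*(a+b+1) - 2*a*b
def V (x : ℕ → ℤ) (n : ℕ) : ℤ := vf (A x n) (B x n)
def Vp (x : ℕ → ℤ) (n : ℕ) : ℤ := vf (max (A x n - 1) 0) (B x n + 1)
def Vm (x : ℕ → ℤ) (n : ℕ) : ℤ := vf (A x n + 1) (max (B x n - 1) 0)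

/-- the stopped process `V_{n ∧ T}` where `T` is the first time `D = r-1`. -/
def U (r : ℕ) (x : ℕ → ℤ) : ℕ → ℤ
  | 0 => 0
  | n+1 => if D x n ≤ (r:ℤ) - 2 then V x (n+1) else U r x n

lemma s_zero (x : ℕ → ℤ) : s x 0 = 0 := by simp [s]
lemma s_succ (x : ℕ → ℤ) (n : ℕ) : s x (n+1) = s x n + x n := Finset.sum_range_succ x n

lemma s_le_mx (x : ℕ → ℤ) : ∀ n, s x n ≤ mx x n
  | 0 => by simp [s_zero, mx]
  | n+1 => le_max_right _ _

lemma mn_le_s (x : ℕ → ℤ) : ∀ n, mn x n ≤ s x n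
  | 0 => by simp [s_zero, mn]
  | n+1 => min_le_right _ _

lemma A_nonneg (x : ℕ → ℤ) (n : ℕ) : 0 ≤ A x n := by
  have := s_le_mx x n; simp only [A]; omega

lemma B_nonneg (x : ℕ → ℤ) (n : ℕ) : 0 ≤ B x n := by
  have := mn_le_s x n; simp only [B]; omega

lemma D_eq (x : ℕ → ℤ) (n : ℕ) : D x n = A x n + B x n := by simp only [D, A, B]; ring

lemma D_nonneg (x : ℕ → ℤ) (n : ℕ) : 0 ≤ D x n := by
  have := A_nonneg x n; have := B_nonneg x n; rw [D_eq]; omega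

lemma mx_mono (x : ℕ → ℤ) (n : ℕ) : mx x n ≤ mx x (n+1) := le_max_left _ _
lemma mn_anti (x : ℕ → ℤ) (n : ℕ) : mn x (n+1) ≤ mn x n := min_le_left _ _

lemma D_mono (x : ℕ → ℤ) : Monotone (D x) := by
  apply monotone_nat_of_le_succ
  intro n
  have := mx_mono x n; have := mn_anti x n
  simp only [D]; omega

lemma A_step_up (x : ℕ → ℤ) (n : ℕ) (h : x n = 1) :
    A x (n+1) = max (A x n - 1) 0 := by
  simp only [A, mx, s_succ, h]
  have := s_le_mx x n
  omega

lemma B_step_up (x : ℕ → ℤ) (n : ℕ) (h : x n = 1) :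
    B x (n+1) = B x n + 1 := by
  simp only [B, mn, s_succ, h]
  have := mn_le_s x n
  omega

lemma A_step_down (x : ℕ → ℤ) (n : ℕ) (h : x n = -1) :
    A x (n+1) = A x n + 1 := by
  simp only [A, mx, s_succ, h]
  have := s_le_mx x n
  omega

lemma B_step_down (x : ℕ → ℤ) (n : ℕ) (h : x n = -1) :
    B x (n+1) = max (B x n - 1) 0 := by
  simp only [B, mn, s_succ, h]
  have := mn_le_s x n
  omega

lemma V_step_up (x : ℕ → ℤ) (n : ℕ) (h : x n = 1) : V x (n+1) = Vp x n := by
  rw [V, A_step_up x n h, B_step_up x n h, Vp]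

lemma V_step_down (x : ℕ → ℤ) (n : ℕ) (h : x n = -1) : V x (n+1) = Vm x n := by
  rw [V, A_step_down x n h, B_step_down x n h, Vm]

/-- the key martingale identity -/
lemma vf_key (a b : ℤ) (ha : 0 ≤ a) (hb : 0 ≤ b) :
    vf (max (a-1) 0) (b+1) + vf (a+1) (max (b-1) 0) = 2 * vf a b + 4 := by
  rcases eq_or_lt_of_le ha with ha' | ha' <;> rcases eq_or_lt_of_le hb with hb' | hb'
  · rw [← ha', ← hb']; decide
  · rw [← ha']
    rw [show max ((0:ℤ)-1) 0 = 0 by decide, max_eq_left (by omega : (0:ℤ) ≤ b - 1)]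
    simp only [vf]; ring
  · rw [← hb']
    rw [show max ((0:ℤ)-1) 0 = 0 by decide, max_eq_left (by omega : (0:ℤ) ≤ a - 1)]
    simp only [vf]; ring
  · rw [max_eq_left (by omega : (0:ℤ) ≤ a - 1), max_eq_left (by omega : (0:ℤ) ≤ b - 1)]
    simp only [vf]; ring

lemma Vp_add_Vm (x : ℕ → ℤ) (n : ℕ) : Vp x n + Vm x n = 2 * V x n + 4 :=
  vf_key _ _ (A_nonneg x n) (B_nonneg x n)

lemma V_nonneg (x : ℕ → ℤ) (n : ℕ) : 0 ≤ V x n := by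
  have ha := A_nonneg x n; have hb := B_nonneg x n
  have : vf (A x n) (B x n) = (A x n)^2 + (B x n)^2 + A x n + B x n := by simp [vf]; ring
  rw [V, this]
  positivity

lemma V_le (x : ℕ → ℤ) (n : ℕ) : V x n ≤ D x n * (D x n + 1) := by
  have ha := A_nonneg x n; have hb := B_nonneg x n
  have : D x n * (D x n + 1) - V x n = 2 * (A x n * B x n) := by
    rw [D_eq]; simp [V, vf]; ring
  nlinarith [mul_nonneg ha hb]

lemma V_zero (x : ℕ → ℤ) : V x 0 = 0 := by
  simp [V, A, B, mx, mn, s_zero, vf]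

lemma D_step_le (x : ℕ → ℤ) (n : ℕ) (h : x n = 1 ∨ x n = -1) :
    D x (n+1) ≤ D x n + 1 := by
  rcases h with h | h
  · rw [D_eq, D_eq, A_step_up x n h, B_step_up x n h]
    have := A_nonneg x n; omega
  · rw [D_eq, D_eq, A_step_down x n h, B_step_down x n h]
    have := B_nonneg x n; omega

lemma U_eq_V (r : ℕ) (x : ℕ → ℤ) : ∀ n, D x n ≤ (r:ℤ) - 2 → U r x n = V x n
  | 0, _ => (V_zero x).symm
  | n+1, h => by
      have hn : D x n ≤ (r:ℤ) - 2 := le_trans (D_mono x (Nat.le_succ n)) h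
      simp [U, hn]

lemma U_stay (r : ℕ) (x : ℕ → ℤ) (n : ℕ) (h : ¬ (D x n ≤ (r:ℤ) - 2)) :
    U r x (n+1) = U r x n := by simp [U, h]

lemma U_bounds (r : ℕ) (x : ℕ → ℤ) (hx : ∀ i, x i = 1 ∨ x i = -1) :
    ∀ n, 0 ≤ U r x n ∧ U r x n ≤ ((r:ℤ) - 1) * r
  | 0 => by
      constructor
      · simp [U]
      · simp only [U]
        have h0 : (0:ℤ) ≤ (r:ℤ) := Int.natCast_nonneg r
        rcases eq_or_lt_of_le h0 with h1 | h1
        · rw [← h1]; norm_num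
        · nlinarith
  | n+1 => by
      by_cases h : D x n ≤ (r:ℤ) - 2
      · have hD : D x (n+1) ≤ (r:ℤ) - 1 := le_trans (D_step_le x n (hx n)) (by omega)
        have h0 := D_nonneg x (n+1)
        have hv := V_le x (n+1)
        have := V_nonneg x (n+1)
        simp only [U, if_pos h]
        constructor
        · exact V_nonneg x (n+1)
        · nlinarith
      · simp only [U, if_neg h]
        exact U_bounds r x hx n

/-- once `D` has reached `r-1`, `U` equals `(r-1)r` ever after -/
lemma U_final (r : ℕ) (x : ℕ → ℤ) (hx : ∀ i, x i = 1 ∨ x i = -1) :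
    ∀ n, (r:ℤ) - 1 ≤ D x n → U r x (n+1) = ((r:ℤ) - 1) * r
  | 0, h => by
      have hD0 : D x 0 = 0 := by simp [D, mx, mn]
      have hr : (r:ℤ) ≤ 1 := by omega
      have hr0 : (0:ℤ) ≤ r := Int.natCast_nonneg r
      have hcond : ¬ (D x 0 ≤ (r:ℤ) - 2) := by omega
      simp only [U, if_neg hcond]
      interval_cases h' : (r:ℤ) <;> simp_all
  | n+1, h => by
      by_cases hp : (r:ℤ) - 1 ≤ D x n
      · have hcond : ¬ (D x (n+1) ≤ (r:ℤ) - 2) := by omega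
        rw [U_stay r x (n+1) hcond]
        exact U_final r x hx n hp
      · -- D jumps to exactly r-1 at time n+1, and the new extreme is the current position
        have h1 : D x n ≤ (r:ℤ) - 2 := by omega
        have h2 : D x (n+1) = (r:ℤ) - 1 := by
          have := D_step_le x (n+1-1) (by simpa using hx n)
          simp at this
          omega
        have hincr : D x n < D x (n+1) := by omega
        have hAB : A x (n+1) * B x (n+1) = 0 := by
          rcases hx n with hs | hs
          · rw [A_step_up x n hs]
            rw [D_eq, D_eq, A_step_up x n hs, B_step_up x n hs] at hincr
            have hA0 : A x n = 0 := by have := A_nonneg x n; omega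
            simp [hA0]
          · rw [B_step_down x n hs]
            rw [D_eq, D_eq, A_step_down x n hs, B_step_down x n hs] at hincr
            have hB0 : B x n = 0 := by have := B_nonneg x n; omega
            simp [hB0]
        have hcond : ¬ (D x (n+1) ≤ (r:ℤ) - 2) := by omega
        rw [U_stay r x (n+1) hcond]
        simp only [U, if_pos h1]
        have : V x (n+1) = D x (n+1) * (D x (n+1) + 1) - 2 * (A x (n+1) * B x (n+1)) := by
          rw [D_eq]; simp [V, vf]; ring
        rw [this, hAB, h2]
        ring

lemma U_eventually (r : ℕ) (x : ℕ → ℤ) (hx : ∀ i, x i = 1 ∨ x i = -1) (n : ℕ)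
    (h : (r:ℤ) - 1 ≤ D x n) : ∀ m, n + 1 ≤ m → U r x m = ((r:ℤ) - 1) * r := by
  intro m hm
  induction m with
  | zero => omega
  | succ m ih =>
      rcases Nat.lt_or_ge (m+1) (n+2) with hc | hc
      · have : m + 1 = n + 1 := by omega
        rw [this]; exact U_final r x hx n h
      · have hnm : n ≤ m := by omega
        have hD : ¬ (D x m ≤ (r:ℤ) - 2) := by
          have := D_mono x hnm; omega
        rw [U_stay r x m hD]
        exact ih (by omega)

/-- the set of visited sites is the integer interval between the running min and max. -/
lemma image_eq_Icc (x : ℕ → ℤ) (hx : ∀ i, x i = 1 ∨ x i = -1) :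
    ∀ n, (Finset.range (n+1)).image (s x) = Finset.Icc (mn x n) (mx x n)
  | 0 => by
      simp [s_zero, mx, mn]
  | n+1 => by
      have IH := image_eq_Icc x hx n
      rw [Finset.range_add_one, Finset.image_insert, IH]
      have hle := mn_le_s x n
      have hge := s_le_mx x n
      have hs : s x (n+1) = s x n + x n := s_succ x n
      show insert (s x (n+1)) _ = _
      have hmx : mx x (n+1) = max (mx x n) (s x (n+1)) := rfl
      have hmn : mn x (n+1) = min (mn x n) (s x (n+1)) := rfl
      rcases hx n with h | h <;> rw [h] at hs <;>
        · ext z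
          simp only [Finset.mem_insert, Finset.mem_Icc, hmx, hmn, le_min_iff, min_le_iff,
            le_max_iff, max_le_iff]
          omega

lemma card_image (x : ℕ → ℤ) (hx : ∀ i, x i = 1 ∨ x i = -1) (n : ℕ) (r : ℕ) :
    (r ≤ ((Finset.range (n+1)).image (s x)).card) ↔ ((r:ℤ) - 1 ≤ D x n) := by
  rw [image_eq_Icc x hx n, Int.card_Icc]
  have h1 := mn_le_s x n
  have h2 := s_le_mx x n
  rw [D]
  omega

/-- `s`, and everything derived from it up to time `n`, depends only on the first `n` steps -/
lemma s_congr {x y : ℕ → ℤ} {n : ℕ} (h : ∀ i < n, x i = y i) : s x n = s y n := by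
  unfold s; exact Finset.sum_congr rfl (fun i hi => h i (Finset.mem_range.mp hi))

lemma mx_congr {x y : ℕ → ℤ} : ∀ {n : ℕ}, (∀ i < n, x i = y i) → mx x n = mx y n
  | 0, _ => rfl
  | n+1, h => by
      rw [mx, mx, mx_congr (fun i hi => h i (Nat.lt_succ_of_lt hi)), s_congr h]

lemma mn_congr {x y : ℕ → ℤ} : ∀ {n : ℕ}, (∀ i < n, x i = y i) → mn x n = mn y n
  | 0, _ => rfl
  | n+1, h => by
      rw [mn, mn, mn_congr (fun i hi => h i (Nat.lt_succ_of_lt hi)), s_congr h]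

lemma A_congr {x y : ℕ → ℤ} {n : ℕ} (h : ∀ i < n, x i = y i) : A x n = A y n := by
  rw [A, A, mx_congr h, s_congr h]

lemma B_congr {x y : ℕ → ℤ} {n : ℕ} (h : ∀ i < n, x i = y i) : B x n = B y n := by
  rw [B, B, mn_congr h, s_congr h]

lemma D_congr {x y : ℕ → ℤ} {n : ℕ} (h : ∀ i < n, x i = y i) : D x n = D y n := by
  rw [D, D, mx_congr h, mn_congr h]

lemma V_congr {x y : ℕ → ℤ} {n : ℕ} (h : ∀ i < n, x i = y i) : V x n = V y n := by
  rw [V, V, A_congr h, B_congr h]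

lemma Vp_congr {x y : ℕ → ℤ} {n : ℕ} (h : ∀ i < n, x i = y i) : Vp x n = Vp y n := by
  rw [Vp, Vp, A_congr h, B_congr h]

lemma Vm_congr {x y : ℕ → ℤ} {n : ℕ} (h : ∀ i < n, x i = y i) : Vm x n = Vm y n := by
  rw [Vm, Vm, A_congr h, B_congr h]

lemma U_congr (r : ℕ) {x y : ℕ → ℤ} : ∀ {n : ℕ}, (∀ i < n, x i = y i) → U r x n = U r y n
  | 0, _ => rfl
  | n+1, h => by
      have h' : ∀ i < n, x i = y i := fun i hi => h i (Nat.lt_succ_of_lt hi)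
      rw [U, U, D_congr h', V_congr h, U_congr r h']


section Prob
open MeasureTheory ProbabilityTheory

variable {Ω : Type*} [MeasurableSpace Ω] (ξ : ℕ → Ω → ℤ)

/-- the path of steps seen by `ω` -/
def path (ξ : ℕ → Ω → ℤ) (ω : Ω) : ℕ → ℤ := fun i => ξ i ω

variable (hm : ∀ n, Measurable (ξ n))
include hm

lemma meas_s (n : ℕ) : Measurable fun ω => s (path ξ ω) n :=
  Finset.measurable_sum _ (fun i _ => hm i)

lemma meas_mx : ∀ n, Measurable fun ω => mx (path ξ ω) n
  | 0 => measurable_const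
  | n+1 => (meas_mx n).max (meas_s ξ hm (n+1))

lemma meas_mn : ∀ n, Measurable fun ω => mn (path ξ ω) n
  | 0 => measurable_const
  | n+1 => (meas_mn n).min (meas_s ξ hm (n+1))

lemma meas_A (n : ℕ) : Measurable fun ω => A (path ξ ω) n :=
  (meas_mx ξ hm n).sub (meas_s ξ hm n)

lemma meas_B (n : ℕ) : Measurable fun ω => B (path ξ ω) n :=
  (meas_s ξ hm n).sub (meas_mn ξ hm n)

lemma meas_D (n : ℕ) : Measurable fun ω => D (path ξ ω) n :=
  (meas_mx ξ hm n).sub (meas_mn ξ hm n)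

omit hm in
lemma meas_vf {f g : Ω → ℤ} (hf : Measurable f) (hg : Measurable g) :
    Measurable fun ω => vf (f ω) (g ω) := by
  unfold vf
  exact (((hf.add hg).mul ((hf.add hg).add measurable_const)).sub
    ((measurable_const.mul hf).mul hg))

lemma meas_V (n : ℕ) : Measurable fun ω => V (path ξ ω) n :=
  meas_vf (meas_A ξ hm n) (meas_B ξ hm n)

lemma meas_Vp (n : ℕ) : Measurable fun ω => Vp (path ξ ω) n :=
  meas_vf (((meas_A ξ hm n).sub measurable_const).max measurable_const)
    ((meas_B ξ hm n).add measurable_const)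

lemma meas_Vm (n : ℕ) : Measurable fun ω => Vm (path ξ ω) n :=
  meas_vf ((meas_A ξ hm n).add measurable_const)
    (((meas_B ξ hm n).sub measurable_const).max measurable_const)

lemma measSet_En (r : ℕ) (n : ℕ) : MeasurableSet {ω | D (path ξ ω) n ≤ (r:ℤ) - 2} :=
  meas_D ξ hm n measurableSet_Iic

lemma meas_U (r : ℕ) : ∀ n, Measurable fun ω => U r (path ξ ω) n
  | 0 => measurable_const
  | n+1 => Measurable.ite (measSet_En ξ hm r n) (meas_V ξ hm (n+1)) (meas_U r n)


variable (μ : Measure Ω) [IsProbabilityMeasure μ]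

omit hm in
lemma good_ae (hstep : ∀ n, μ {ω | ξ n ω = 1} = 1 / 2 ∧ μ {ω | ξ n ω = -1} = 1 / 2)
    (hmeas : ∀ n, Measurable (ξ n)) :
    ∀ᵐ ω ∂μ, ∀ i, ξ i ω = 1 ∨ ξ i ω = -1 := by
  rw [MeasureTheory.ae_all_iff]
  intro i
  have h1 : MeasurableSet {ω | ξ i ω = 1} := hmeas i (measurableSet_singleton 1)
  have h2 : MeasurableSet {ω | ξ i ω = -1} := hmeas i (measurableSet_singleton (-1))
  have hd : Disjoint {ω | ξ i ω = 1} {ω | ξ i ω = -1} := by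
    rw [Set.disjoint_left]
    intro ω hω1 hω2
    simp only [Set.mem_setOf_eq] at hω1 hω2
    rw [hω1] at hω2; exact absurd hω2 (by decide)
  have hu : μ ({ω | ξ i ω = 1} ∪ {ω | ξ i ω = -1}) = 1 := by
    rw [measure_union hd h2, (hstep i).1, (hstep i).2]
    rw [ENNReal.div_add_div_same]
    rw [one_add_one_eq_two]
    exact ENNReal.div_self (two_ne_zero) (ENNReal.ofNat_ne_top)
  have : μ ({ω | ξ i ω = 1} ∪ {ω | ξ i ω = -1})ᶜ = 0 := by
    rw [measure_compl (h1.union h2) (measure_ne_top μ _), hu, measure_univ, tsub_self]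
  refine measure_mono_null ?_ this
  intro ω hω
  simp only [Set.mem_compl_iff, Set.mem_union, Set.mem_setOf_eq] at hω ⊢
  tauto

omit [IsProbabilityMeasure μ] in
/-- independence of a functional of the first `n` steps from the `n`-th step -/
lemma indep_front (hindep : iIndepFun ξ μ) (n : ℕ)
    (F : (ℕ → ℤ) → ℝ) (hF : ∀ x y : ℕ → ℤ, (∀ i < n, x i = y i) → F x = F y)
    (g : ℤ → ℝ) :
    IndepFun (fun ω => F (path ξ ω)) (fun ω => g (ξ n ω)) μ := by
  have hdisj : Disjoint (Finset.range n) ({n} : Finset ℕ) := by simp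
  have h := hindep.indepFun_finset (Finset.range n) {n} hdisj hm
  set Φ : ((i : (Finset.range n : Finset ℕ)) → ℤ) → ℝ :=
    fun y => F (fun i => if h : i ∈ Finset.range n then y ⟨i, h⟩ else 0) with hΦ
  set Ψ : ((i : ({n} : Finset ℕ)) → ℤ) → ℝ :=
    fun y => g (y ⟨n, Finset.mem_singleton_self n⟩) with hΨ
  have hΦm : Measurable Φ := measurable_of_countable _
  have hΨm : Measurable Ψ := measurable_of_countable _
  have hc := h.comp hΦm hΨm
  have e1 : (Φ ∘ fun ω (i : (Finset.range n : Finset ℕ)) => ξ i ω)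
      = fun ω => F (path ξ ω) := by
    funext ω
    exact hF _ _ (fun i hi => by
      simp only [dif_pos (Finset.mem_range.mpr hi)]; rfl)
  have e2 : (Ψ ∘ fun ω (i : ({n} : Finset ℕ)) => ξ i ω) = fun ω => g (ξ n ω) := rfl
  rw [e1, e2] at hc
  exact hc

omit hm in
lemma vf_id (a b : ℤ) : vf a b = a^2 + b^2 + a + b := by simp only [vf]; ring

omit hm in
lemma vf_range {a b K : ℤ} (ha : 0 ≤ a) (hb : 0 ≤ b) (haK : a ≤ K) (hbK : b ≤ K) :
    0 ≤ vf a b ∧ vf a b ≤ 2*K^2 + 2*K := by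
  rw [vf_id]
  constructor <;> nlinarith

/-- the functional giving the conditional increment of `U` when the next step is `+1` -/
noncomputable def Fp (r n : ℕ) (x : ℕ → ℤ) : ℝ :=
  if D x n ≤ (r:ℤ) - 2 then ((Vp x n - V x n : ℤ) : ℝ) else 0

noncomputable def Fm (r n : ℕ) (x : ℕ → ℤ) : ℝ :=
  if D x n ≤ (r:ℤ) - 2 then ((Vm x n - V x n : ℤ) : ℝ) else 0

omit hm in
lemma Fp_congr (r n : ℕ) {x y : ℕ → ℤ} (h : ∀ i < n, x i = y i) : Fp r n x = Fp r n y := by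
  unfold Fp; rw [D_congr h, Vp_congr h, V_congr h]

omit hm in
lemma Fm_congr (r n : ℕ) {x y : ℕ → ℤ} (h : ∀ i < n, x i = y i) : Fm r n x = Fm r n y := by
  unfold Fm; rw [D_congr h, Vm_congr h, V_congr h]

omit hm in
lemma Fp_bound (r n : ℕ) (x : ℕ → ℤ) :
    |Fp r n x| ≤ ((2*((r:ℤ)+1)^2 + 2*((r:ℤ)+1) : ℤ) : ℝ) := by
  have hA := A_nonneg x n
  have hB := B_nonneg x n
  unfold Fp
  split_ifs with h
  · have hD : A x n + B x n ≤ (r:ℤ) - 2 := by rw [← D_eq]; exact h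
    have h1 : 0 ≤ Vp x n ∧ Vp x n ≤ 2*((r:ℤ)+1)^2 + 2*((r:ℤ)+1) := by
      apply vf_range (le_max_right _ _) (by omega) (max_le (by omega) (by omega)) (by omega)
    have h2 : 0 ≤ V x n ∧ V x n ≤ 2*((r:ℤ)+1)^2 + 2*((r:ℤ)+1) :=
      vf_range hA hB (by omega) (by omega)
    rw [← Int.cast_abs]
    have : |Vp x n - V x n| ≤ 2*((r:ℤ)+1)^2 + 2*((r:ℤ)+1) := by
      rw [abs_sub_le_iff]; omega
    exact_mod_cast this
  · simp only [abs_zero]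
    have : (0:ℤ) ≤ 2*((r:ℤ)+1)^2 + 2*((r:ℤ)+1) := by positivity
    exact_mod_cast this

omit hm in
lemma Fm_bound (r n : ℕ) (x : ℕ → ℤ) :
    |Fm r n x| ≤ ((2*((r:ℤ)+1)^2 + 2*((r:ℤ)+1) : ℤ) : ℝ) := by
  have hA := A_nonneg x n
  have hB := B_nonneg x n
  unfold Fm
  split_ifs with h
  · have hD : A x n + B x n ≤ (r:ℤ) - 2 := by rw [← D_eq]; exact h
    have h1 : 0 ≤ Vm x n ∧ Vm x n ≤ 2*((r:ℤ)+1)^2 + 2*((r:ℤ)+1) := by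
      apply vf_range (by omega) (le_max_right _ _) (by omega) (max_le (by omega) (by omega))
    have h2 : 0 ≤ V x n ∧ V x n ≤ 2*((r:ℤ)+1)^2 + 2*((r:ℤ)+1) :=
      vf_range hA hB (by omega) (by omega)
    rw [← Int.cast_abs]
    have : |Vm x n - V x n| ≤ 2*((r:ℤ)+1)^2 + 2*((r:ℤ)+1) := by
      rw [abs_sub_le_iff]; omega
    exact_mod_cast this
  · simp only [abs_zero]
    have : (0:ℤ) ≤ 2*((r:ℤ)+1)^2 + 2*((r:ℤ)+1) := by positivity
    exact_mod_cast this

omit hm in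
lemma meas_cast {f : Ω → ℤ} (hf : Measurable f) : Measurable fun ω => ((f ω : ℤ) : ℝ) :=
  (measurable_of_countable (fun z : ℤ => (z : ℝ))).comp hf

lemma meas_Fp (r n : ℕ) : Measurable fun ω => Fp r n (path ξ ω) := by
  unfold Fp
  exact Measurable.ite (measSet_En ξ hm r n)
    (meas_cast ((meas_Vp ξ hm n).sub (meas_V ξ hm n))) measurable_const

lemma meas_Fm (r n : ℕ) : Measurable fun ω => Fm r n (path ξ ω) := by
  unfold Fm
  exact Measurable.ite (measSet_En ξ hm r n)
    (meas_cast ((meas_Vm ξ hm n).sub (meas_V ξ hm n))) measurable_const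

lemma int_Fp (r n : ℕ) : Integrable (fun ω => Fp r n (path ξ ω)) μ :=
  Integrable.mono' (integrable_const _) (meas_Fp ξ hm r n).aestronglyMeasurable
    (Filter.Eventually.of_forall (fun ω => Fp_bound r n (path ξ ω)))

lemma int_Fm (r n : ℕ) : Integrable (fun ω => Fm r n (path ξ ω)) μ :=
  Integrable.mono' (integrable_const _) (meas_Fm ξ hm r n).aestronglyMeasurable
    (Filter.Eventually.of_forall (fun ω => Fm_bound r n (path ξ ω)))


omit hm in
lemma Fp_add_Fm (r n : ℕ) (x : ℕ → ℤ) :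
    Fp r n x + Fm r n x = if D x n ≤ (r:ℤ) - 2 then (4:ℝ) else 0 := by
  unfold Fp Fm
  split_ifs with h
  · have hkey := Vp_add_Vm x n
    have : (Vp x n - V x n) + (Vm x n - V x n) = (4:ℤ) := by omega
    push_cast
    exact_mod_cast congrArg (fun z : ℤ => (z:ℝ)) this
  · simp

lemma int_U (hstep : ∀ n, μ {ω | ξ n ω = 1} = 1 / 2 ∧ μ {ω | ξ n ω = -1} = 1 / 2) (r m : ℕ) :
    Integrable (fun ω => ((U r (path ξ ω) m : ℤ) : ℝ)) μ := by
  refine Integrable.mono' (integrable_const ((((r:ℤ)-1)*r : ℤ) : ℝ))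
    (meas_cast (meas_U ξ hm r m)).aestronglyMeasurable ?_
  filter_upwards [good_ae ξ μ hstep hm] with ω hg
  obtain ⟨h0, h1⟩ := U_bounds r (path ξ ω) hg m
  rw [Real.norm_eq_abs, abs_of_nonneg (by exact_mod_cast h0)]
  exact_mod_cast h1

lemma step_integral (hstep : ∀ n, μ {ω | ξ n ω = 1} = 1 / 2 ∧ μ {ω | ξ n ω = -1} = 1 / 2)
    (hindep : iIndepFun ξ μ) (r n : ℕ) :
    ∫ ω, ((U r (path ξ ω) (n+1) : ℤ) : ℝ) ∂μ
      = ∫ ω, ((U r (path ξ ω) n : ℤ) : ℝ) ∂μ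
        + 2 * (μ {ω | D (path ξ ω) n ≤ (r:ℤ) - 2}).toReal := by
  classical
  set gp : ℤ → ℝ := fun z => if z = 1 then 1 else 0 with hgp
  set gm : ℤ → ℝ := fun z => if z = -1 then 1 else 0 with hgm
  -- pointwise decomposition on the good set
  have hae : ∀ᵐ ω ∂μ, ((U r (path ξ ω) (n+1) : ℤ) : ℝ)
      = ((U r (path ξ ω) n : ℤ) : ℝ)
        + (Fp r n (path ξ ω) * gp (ξ n ω) + Fm r n (path ξ ω) * gm (ξ n ω)) := by
    filter_upwards [good_ae ξ μ hstep hm] with ω hg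
    have hx : path ξ ω n = ξ n ω := rfl
    rcases hg n with h1 | h1
    · have hgp1 : gp (ξ n ω) = 1 := by simp [hgp, h1]
      have hgm0 : gm (ξ n ω) = 0 := by simp [hgm, h1]
      rw [hgp1, hgm0, mul_one, mul_zero, add_zero]
      by_cases hd : D (path ξ ω) n ≤ (r:ℤ) - 2
      · have e1 : U r (path ξ ω) (n+1) = V (path ξ ω) (n+1) := by simp [U, hd]
        have e2 : U r (path ξ ω) n = V (path ξ ω) n := U_eq_V r _ n hd
        have e3 : V (path ξ ω) (n+1) = Vp (path ξ ω) n := V_step_up _ n (hx ▸ h1)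
        rw [e1, e2, e3]
        unfold Fp
        rw [if_pos hd]
        push_cast
        ring
      · rw [U_stay r _ n hd]
        unfold Fp
        rw [if_neg hd]
        ring
    · have hgp1 : gp (ξ n ω) = 0 := by simp [hgp, h1]
      have hgm0 : gm (ξ n ω) = 1 := by simp [hgm, h1]
      rw [hgp1, hgm0, mul_one, mul_zero, zero_add]
      by_cases hd : D (path ξ ω) n ≤ (r:ℤ) - 2
      · have e1 : U r (path ξ ω) (n+1) = V (path ξ ω) (n+1) := by simp [U, hd]
        have e2 : U r (path ξ ω) n = V (path ξ ω) n := U_eq_V r _ n hd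
        have e3 : V (path ξ ω) (n+1) = Vm (path ξ ω) n := V_step_down _ n (hx ▸ h1)
        rw [e1, e2, e3]
        unfold Fm
        rw [if_pos hd]
        push_cast
        ring
      · rw [U_stay r _ n hd]
        unfold Fm
        rw [if_neg hd]
        ring
  rw [integral_congr_ae hae]
  -- integrability of the pieces
  have hsetp : MeasurableSet {ω | ξ n ω = 1} := hm n (measurableSet_singleton 1)
  have hsetm : MeasurableSet {ω | ξ n ω = -1} := hm n (measurableSet_singleton (-1))
  have hgpmeas : Measurable fun ω => gp (ξ n ω) :=
    (measurable_of_countable gp).comp (hm n)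
  have hgmmeas : Measurable fun ω => gm (ξ n ω) :=
    (measurable_of_countable gm).comp (hm n)
  have hgpbd : ∀ z, |gp z| ≤ 1 := by
    intro z; simp only [hgp]; split_ifs <;> simp
  have hgmbd : ∀ z, |gm z| ≤ 1 := by
    intro z; simp only [hgm]; split_ifs <;> simp
  set C : ℝ := ((2*((r:ℤ)+1)^2 + 2*((r:ℤ)+1) : ℤ) : ℝ) with hC
  have hintp : Integrable (fun ω => Fp r n (path ξ ω) * gp (ξ n ω)) μ := by
    refine Integrable.mono' (integrable_const C)
      ((meas_Fp ξ hm r n).mul hgpmeas).aestronglyMeasurable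
      (Filter.Eventually.of_forall fun ω => ?_)
    rw [Real.norm_eq_abs, abs_mul]
    calc |Fp r n (path ξ ω)| * |gp (ξ n ω)| ≤ C * 1 :=
          mul_le_mul (Fp_bound r n _) (hgpbd _) (abs_nonneg _) (le_trans (abs_nonneg _) (Fp_bound r n (path ξ ω)))
      _ = C := mul_one C
  have hintm : Integrable (fun ω => Fm r n (path ξ ω) * gm (ξ n ω)) μ := by
    refine Integrable.mono' (integrable_const C)
      ((meas_Fm ξ hm r n).mul hgmmeas).aestronglyMeasurable
      (Filter.Eventually.of_forall fun ω => ?_)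
    rw [Real.norm_eq_abs, abs_mul]
    calc |Fm r n (path ξ ω)| * |gm (ξ n ω)| ≤ C * 1 :=
          mul_le_mul (Fm_bound r n _) (hgmbd _) (abs_nonneg _) (le_trans (abs_nonneg _) (Fm_bound r n (path ξ ω)))
      _ = C := mul_one C
  have hintsum : Integrable
      (fun ω => Fp r n (path ξ ω) * gp (ξ n ω) + Fm r n (path ξ ω) * gm (ξ n ω)) μ :=
    hintp.add hintm
  rw [integral_add (int_U ξ hm μ hstep r n) hintsum, integral_add hintp hintm]
  -- independence factorization
  have hip : ∫ ω, Fp r n (path ξ ω) * gp (ξ n ω) ∂μ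
      = (∫ ω, Fp r n (path ξ ω) ∂μ) * (∫ ω, gp (ξ n ω) ∂μ) := by
    have hind := indep_front ξ hm μ hindep n (Fp r n) (fun x y h => Fp_congr r n h) gp
    exact hind.integral_fun_mul_eq_mul_integral (int_Fp ξ hm μ r n).aestronglyMeasurable
      (Integrable.mono' (integrable_const 1) hgpmeas.aestronglyMeasurable
        (Filter.Eventually.of_forall fun ω => hgpbd _)).aestronglyMeasurable
  have him : ∫ ω, Fm r n (path ξ ω) * gm (ξ n ω) ∂μ
      = (∫ ω, Fm r n (path ξ ω) ∂μ) * (∫ ω, gm (ξ n ω) ∂μ) := by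
    have hind := indep_front ξ hm μ hindep n (Fm r n) (fun x y h => Fm_congr r n h) gm
    exact hind.integral_fun_mul_eq_mul_integral (int_Fm ξ hm μ r n).aestronglyMeasurable
      (Integrable.mono' (integrable_const 1) hgmmeas.aestronglyMeasurable
        (Filter.Eventually.of_forall fun ω => hgmbd _)).aestronglyMeasurable
  have hgpint : ∫ ω, gp (ξ n ω) ∂μ = 1/2 := by
    have : (fun ω => gp (ξ n ω)) = Set.indicator {ω | ξ n ω = 1} (fun _ => (1:ℝ)) := by
      funext ω
      simp only [hgp, Set.indicator_apply, Set.mem_setOf_eq]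
    rw [this, integral_indicator hsetp, setIntegral_const, measureReal_def, (hstep n).1]
    norm_num
  have hgmint : ∫ ω, gm (ξ n ω) ∂μ = 1/2 := by
    have : (fun ω => gm (ξ n ω)) = Set.indicator {ω | ξ n ω = -1} (fun _ => (1:ℝ)) := by
      funext ω
      simp only [hgm, Set.indicator_apply, Set.mem_setOf_eq]
    rw [this, integral_indicator hsetm, setIntegral_const, measureReal_def, (hstep n).2]
    norm_num
  rw [hip, him, hgpint, hgmint]
  have hsum : (∫ ω, Fp r n (path ξ ω) ∂μ) + (∫ ω, Fm r n (path ξ ω) ∂μ)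
      = 4 * (μ {ω | D (path ξ ω) n ≤ (r:ℤ) - 2}).toReal := by
    rw [← integral_add (int_Fp ξ hm μ r n) (int_Fm ξ hm μ r n)]
    show ∫ ω, (Fp r n (path ξ ω) + Fm r n (path ξ ω)) ∂μ = _
    have : (fun ω => Fp r n (path ξ ω) + Fm r n (path ξ ω))
        = Set.indicator {ω | D (path ξ ω) n ≤ (r:ℤ) - 2} (fun _ => (4:ℝ)) := by
      funext ω
      rw [Fp_add_Fm]
      simp only [Set.indicator_apply, Set.mem_setOf_eq]
    rw [this, integral_indicator (measSet_En ξ hm r n), setIntegral_const]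
    rw [smul_eq_mul, measureReal_def]; ring
  linarith [hsum]


lemma u_formula (hstep : ∀ n, μ {ω | ξ n ω = 1} = 1 / 2 ∧ μ {ω | ξ n ω = -1} = 1 / 2)
    (hindep : iIndepFun ξ μ) (r n : ℕ) :
    ∫ ω, ((U r (path ξ ω) n : ℤ) : ℝ) ∂μ
      = 2 * ∑ k ∈ Finset.range n, (μ {ω | D (path ξ ω) k ≤ (r:ℤ) - 2}).toReal := by
  induction n with
  | zero => simp [U]
  | succ n ih =>
      rw [step_integral ξ hm μ hstep hindep r n, ih, Finset.sum_range_succ]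
      ring

lemma tsum_p (hstep : ∀ n, μ {ω | ξ n ω = 1} = 1 / 2 ∧ μ {ω | ξ n ω = -1} = 1 / 2)
    (hindep : iIndepFun ξ μ) (r : ℕ) :
    Summable (fun n => (μ {ω | D (path ξ ω) n ≤ (r:ℤ) - 2}).toReal) ∧
      ∑' n, (μ {ω | D (path ξ ω) n ≤ (r:ℤ) - 2}).toReal = ((r:ℝ) - 1) * r / 2 := by
  set p : ℕ → ℝ := fun n => (μ {ω | D (path ξ ω) n ≤ (r:ℤ) - 2}).toReal with hp
  have hp0 : ∀ n, 0 ≤ p n := fun n => ENNReal.toReal_nonneg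
  have hu : ∀ n, ∫ ω, ((U r (path ξ ω) n : ℤ) : ℝ) ∂μ = 2 * ∑ k ∈ Finset.range n, p k :=
    fun n => u_formula ξ hm μ hstep hindep r n
  have hub : ∀ n, ∫ ω, ((U r (path ξ ω) n : ℤ) : ℝ) ∂μ ≤ ((r:ℝ) - 1) * r := by
    intro n
    have h1 : ∫ ω, ((U r (path ξ ω) n : ℤ) : ℝ) ∂μ
        ≤ ∫ _ω, ((((r:ℤ) - 1) * r : ℤ) : ℝ) ∂μ := by
      refine integral_mono_ae (int_U ξ hm μ hstep r n) (integrable_const _) ?_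
      filter_upwards [good_ae ξ μ hstep hm] with ω hg
      exact_mod_cast (U_bounds r (path ξ ω) hg n).2
    rw [integral_const, probReal_univ, one_smul] at h1
    exact le_trans h1 (by push_cast; exact le_refl _)
  have hpsumle : ∀ n, ∑ k ∈ Finset.range n, p k ≤ ((r:ℝ) - 1) * r / 2 := by
    intro n
    have := hub n
    rw [hu n] at this
    linarith
  have hsumm : Summable p := summable_of_sum_range_le hp0 hpsumle
  refine ⟨hsumm, ?_⟩
  have hptend : Filter.Tendsto p Filter.atTop (nhds 0) := hsumm.tendsto_atTop_zero
  set I : Set Ω := ⋂ n, {ω | D (path ξ ω) n ≤ (r:ℤ) - 2} with hIdef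
  have hI : μ I = 0 := by
    have hle : ∀ n, (μ I).toReal ≤ p n := fun n =>
      ENNReal.toReal_mono (measure_ne_top μ _) (measure_mono (Set.iInter_subset _ n))
    have h0 : (μ I).toReal ≤ 0 := ge_of_tendsto' hptend hle
    have h1 : (μ I).toReal = 0 := le_antisymm h0 ENNReal.toReal_nonneg
    exact ((ENNReal.toReal_eq_zero_iff _).mp h1).resolve_right (measure_ne_top μ _)
  have hnI : ∀ᵐ ω ∂μ, ω ∉ I := by
    rw [MeasureTheory.ae_iff]
    have he : {a | ¬ a ∉ I} = I := by ext a; simp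
    rw [he]; exact hI
  have haecv : ∀ᵐ ω ∂μ, Filter.Tendsto (fun n => ((U r (path ξ ω) n : ℤ) : ℝ))
      Filter.atTop (nhds (((r:ℝ) - 1) * r)) := by
    filter_upwards [good_ae ξ μ hstep hm, hnI] with ω hg hni
    obtain ⟨n, hn⟩ : ∃ n, ¬ D (path ξ ω) n ≤ (r:ℤ) - 2 := by
      simpa [hIdef, Set.mem_iInter] using hni
    apply tendsto_atTop_of_eventually_const (i₀ := n + 1)
    intro m hm'
    rw [U_eventually r (path ξ ω) hg n (by omega) m hm']
    push_cast
    ring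
  have hcv : Filter.Tendsto (fun n => ∫ ω, ((U r (path ξ ω) n : ℤ) : ℝ) ∂μ)
      Filter.atTop (nhds (∫ _ω, (((r:ℝ) - 1) * r) ∂μ)) :=
    tendsto_integral_of_dominated_convergence (fun _ => ((r:ℝ) - 1) * r)
      (fun n => (meas_cast (meas_U ξ hm r n)).aestronglyMeasurable)
      (integrable_const _)
      (fun n => by
        filter_upwards [good_ae ξ μ hstep hm] with ω hg
        obtain ⟨h0, h1⟩ := U_bounds r (path ξ ω) hg n
        rw [Real.norm_eq_abs, abs_of_nonneg (by exact_mod_cast h0)]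
        exact_mod_cast h1)
      haecv
  rw [integral_const, probReal_univ, one_smul] at hcv
  have h2 : Filter.Tendsto (fun n => 2 * ∑ k ∈ Finset.range n, p k)
      Filter.atTop (nhds (((r:ℝ) - 1) * r)) := by
    have : (fun n => ∫ ω, ((U r (path ξ ω) n : ℤ) : ℝ) ∂μ)
        = fun n => 2 * ∑ k ∈ Finset.range n, p k := funext hu
    rwa [this] at hcv
  have h4 : Filter.Tendsto (fun n => 2 * ∑ k ∈ Finset.range n, p k)
      Filter.atTop (nhds (2 * ∑' k, p k)) :=
    (hsumm.hasSum.tendsto_sum_nat).const_mul 2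
  have := tendsto_nhds_unique h2 h4
  linarith


omit hm in
lemma image_range_eq (f : ℕ → ℤ) (n : ℕ) :
    (Finset.range (n+1)).image f = Finset.univ.image (fun i : Fin (n+1) => f (i : ℕ)) := by
  ext z
  simp only [Finset.mem_image, Finset.mem_range, Finset.mem_univ, true_and]
  constructor
  · rintro ⟨i, hi, rfl⟩; exact ⟨⟨i, hi⟩, rfl⟩
  · rintro ⟨i, rfl⟩; exact ⟨(i : ℕ), i.isLt, rfl⟩

lemma meas_cond (r n : ℕ) :
    MeasurableSet {ω | r ≤ ((Finset.range (n+1)).image (fun i => s (path ξ ω) i)).card} := by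
  have h1 : Measurable fun ω => (fun i : Fin (n+1) => s (path ξ ω) (i : ℕ)) :=
    measurable_pi_lambda _ (fun i => meas_s ξ hm (i : ℕ))
  have h2 : Measurable fun (y : Fin (n+1) → ℤ) => (Finset.univ.image y).card :=
    measurable_of_countable _
  have he : {ω | r ≤ ((Finset.range (n+1)).image (fun i => s (path ξ ω) i)).card}
      = (fun ω => (Finset.univ.image (fun i : Fin (n+1) => s (path ξ ω) (i : ℕ))).card)
        ⁻¹' {c | r ≤ c} := by
    ext ω
    simp only [Set.mem_setOf_eq, Set.mem_preimage, image_range_eq]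
  rw [he]
  exact (h2.comp h1) MeasurableSet.of_discrete

omit hm in
lemma cond_mono (f : ℕ → ℤ) (r : ℕ) {m n : ℕ} (h : m ≤ n)
    (hc : r ≤ ((Finset.range (m+1)).image f).card) :
    r ≤ ((Finset.range (n+1)).image f).card :=
  le_trans hc (Finset.card_le_card
    (Finset.image_subset_image (Finset.range_subset_range.mpr (by omega))))

end Prob
end SRW

open SRW

lemma time_tsum' {Ω : Type*} (X : ℕ → Ω → ℤ) (r : ℕ) (ω : Ω) :
    timeToVisitDistinct X r ω
      = ∑' n : ℕ, (if r ≤ ((Finset.range (n+1)).image (fun i => X i ω)).card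
          then (0:ℝ≥0∞) else 1) := by
  classical
  unfold timeToVisitDistinct
  by_cases hs : ∃ n, r ≤ ((Finset.range (n+1)).image (fun i => X i ω)).card
  · set m := Nat.find hs with hmdef
    have hm' : r ≤ ((Finset.range (m+1)).image (fun i => X i ω)).card := Nat.find_spec hs
    have hlt : ∀ k < m, ¬ r ≤ ((Finset.range (k+1)).image (fun i => X i ω)).card :=
      fun k hk => Nat.find_min hs hk
    have h1 : sInf ((fun n : ℕ => (n : ℝ≥0∞)) ''
        {n : ℕ | r ≤ ((Finset.range (n + 1)).image (fun i => X i ω)).card}) = (m:ℝ≥0∞) := by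
      apply le_antisymm
      · exact sInf_le ⟨m, hm', rfl⟩
      · refine le_sInf ?_
        rintro b ⟨k, hk, rfl⟩
        have : m ≤ k := Nat.find_min' hs hk
        exact_mod_cast Nat.cast_le.mpr this
    rw [h1, tsum_eq_sum (s := Finset.range m) (fun n hn => by
      have hmn : m ≤ n := by
        by_contra hc
        exact hn (Finset.mem_range.mpr (by omega))
      exact if_pos (cond_mono (fun i => X i ω) r hmn hm'))]
    rw [Finset.sum_congr rfl (fun k hk => if_neg (hlt k (Finset.mem_range.mp hk)))]
    simp
  · push_neg at hs
    have h1 : {n : ℕ | r ≤ ((Finset.range (n + 1)).image (fun i => X i ω)).card} = ∅ := by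
      ext n
      simp only [Set.mem_setOf_eq, Set.mem_empty_iff_false, iff_false, not_le]
      exact hs n
    rw [h1]
    simp only [Set.image_empty, sInf_empty]
    rw [tsum_congr (fun n => if_neg (not_le.mpr (hs n)))]
    exact (ENNReal.tsum_const_eq_top_of_ne_zero one_ne_zero).symm

/-- For a symmetric simple random walk on `ℤ` started at `0`
(i.i.d. `±1` steps with probability `1/2` each), the expected first time at which
the walk has visited `r` distinct sites equals `r(r-1)/2`. -/
theorem expected_time_to_visit_distinct_sites (r : ℕ) (hr : 1 ≤ r)
    {Ω : Type*} [MeasurableSpace Ω] (μ : Measure Ω) [IsProbabilityMeasure μ]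
    (ξ : ℕ → Ω → ℤ) (hmeas : ∀ n, Measurable (ξ n))
    (hstep : ∀ n, μ {ω | ξ n ω = 1} = 1 / 2 ∧ μ {ω | ξ n ω = -1} = 1 / 2)
    (hindep : iIndepFun ξ μ) :
    ∫⁻ ω, timeToVisitDistinct (fun n ω => ∑ i ∈ Finset.range n, ξ i ω) r ω ∂μ
      = ENNReal.ofReal ((r : ℝ) * ((r : ℝ) - 1) / 2) := by
  classical
  set X : ℕ → Ω → ℤ := fun n ω => ∑ i ∈ Finset.range n, ξ i ω with hXdef
  have hXs : ∀ ω, (fun i => X i ω) = s (path ξ ω) := fun ω => rfl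
  have hrep : ∀ ω, timeToVisitDistinct X r ω
      = ∑' n : ℕ, Set.indicator
          {ω' | ¬ r ≤ ((Finset.range (n+1)).image (fun i => X i ω')).card}
          (1 : Ω → ℝ≥0∞) ω := by
    intro ω
    rw [time_tsum' X r ω]
    refine tsum_congr (fun n => ?_)
    by_cases h : r ≤ ((Finset.range (n+1)).image (fun i => X i ω)).card
    · rw [if_pos h, Set.indicator_of_notMem (by simp only [Set.mem_setOf_eq, not_not]; exact h)]
    · rw [if_neg h, Set.indicator_of_mem (by simpa using h)]
      rfl
  rw [lintegral_congr hrep]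
  have hmeasIn : ∀ n : ℕ, MeasurableSet
      {ω' : Ω | ¬ r ≤ ((Finset.range (n+1)).image (fun i => X i ω')).card} := by
    intro n
    have h1 := (meas_cond ξ hmeas r n).compl
    have e : {ω' : Ω | ¬ r ≤ ((Finset.range (n+1)).image (fun i => X i ω')).card}
        = {ω' : Ω | r ≤ ((Finset.range (n+1)).image (fun i => s (path ξ ω') i)).card}ᶜ := by
      ext ω'
      simp only [Set.mem_setOf_eq, Set.mem_compl_iff]
      rw [hXs ω']
    rw [e]
    exact h1
  rw [lintegral_tsum (f := fun n => Set.indicator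
        {ω' | ¬ r ≤ ((Finset.range (n+1)).image (fun i => X i ω')).card} (1 : Ω → ℝ≥0∞))
      (fun n => ((measurable_one.indicator (hmeasIn n)).aemeasurable))]
  have hterm : ∀ n : ℕ, ∫⁻ ω, Set.indicator
      {ω' | ¬ r ≤ ((Finset.range (n+1)).image (fun i => X i ω')).card}
      (1 : Ω → ℝ≥0∞) ω ∂μ
      = μ {ω | D (path ξ ω) n ≤ (r:ℤ) - 2} := by
    intro n
    rw [lintegral_indicator_one (hmeasIn n)]
    apply measure_congr
    rw [Filter.eventuallyEq_set]
    filter_upwards [good_ae ξ μ hstep hmeas] with ω hg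
    have hc := card_image (path ξ ω) hg n r
    show (¬ r ≤ ((Finset.range (n+1)).image (fun i => X i ω)).card)
      ↔ (D (path ξ ω) n ≤ (r:ℤ) - 2)
    rw [hXs ω, hc]
    omega
  rw [tsum_congr hterm]
  obtain ⟨hsumm, htsum⟩ := tsum_p ξ hmeas μ hstep hindep r
  have hofr : ∀ n : ℕ, μ {ω | D (path ξ ω) n ≤ (r:ℤ) - 2}
      = ENNReal.ofReal ((μ {ω | D (path ξ ω) n ≤ (r:ℤ) - 2}).toReal) :=
    fun n => (ENNReal.ofReal_toReal (measure_ne_top μ _)).symm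
  rw [tsum_congr hofr, ← ENNReal.ofReal_tsum_of_nonneg (fun n => ENNReal.toReal_nonneg) hsumm,
    htsum]
  congr 1
  ring
end
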